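/- arXiv:0812.2306 — 2 statements merged into one kernel-verified Lean document; each statement's English description precedes it below -/
import Mathlib

section
/- Let σ be the unique field automorphism of ℚ(q, z_1,…,z_l, w_1,…,w_l) fixing ℚ with σ(q) = q^{−1}, σ(z_i) = z_i^{−1} and σ(w_i) = w_i^{−1} for all i. Then for every m ∈ ℕ^l, σ(X_m(z,w)) = q^{∑_i d_i m_i} · X_m(w,z). -/
/- STATEMENT 12: Let σ be the field automorphism of ℚ(q,z,w) with σ(q)=q⁻¹,
   σ(z_i)=z_i⁻¹, σ(w_i)=w_i⁻¹ (a ring automorphism automatically fixes ℚ).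
   Then σ(X_m(z,w)) = q^{∑ d_i m_i} X_m(w,z), where
   X_m(z,w) = ∑_{0≤a≤m} J_{m−a}(z) J_a(w) q^{W(a)} w^a for the unique family
   (J_m) solving the fermionic recursion (symmetrized Cartan matrix B). -/

noncomputable section

open scoped BigOperators

/-- The field ℚ(q, z_1, …, z_l, w_1, …, w_l). -/
abbrev F12 (l : ℕ) : Type :=
  FractionRing (MvPolynomial (Option (Fin l ⊕ Fin l)) ℚ)

/-- the variable q -/
def q12 (l : ℕ) : F12 l :=
  algebraMap (MvPolynomial (Option (Fin l ⊕ Fin l)) ℚ) (F12 l) (MvPolynomial.X none)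

/-- the variables z_i -/
def z12 (l : ℕ) (i : Fin l) : F12 l :=
  algebraMap (MvPolynomial (Option (Fin l ⊕ Fin l)) ℚ) (F12 l)
    (MvPolynomial.X (some (Sum.inl i)))

/-- the variables w_i -/
def w12 (l : ℕ) (i : Fin l) : F12 l :=
  algebraMap (MvPolynomial (Option (Fin l ⊕ Fin l)) ℚ) (F12 l)
    (MvPolynomial.X (some (Sum.inr i)))

/-- `W(a) = (1/2)∑ B_{ij} a_i a_j − ∑ d_i a_i`  (the double sum is even, so
integer division by 2 gives the exact value). -/
def W12 {l : ℕ} (B : Matrix (Fin l) (Fin l) ℤ) (d : Fin l → ℕ) (a : Fin l → ℕ) : ℤ :=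
  (∑ i, ∑ j, B i j * a i * a j) / 2 - ∑ i, (d i : ℤ) * a i

/-- `(Q;Q)_n = ∏_{k=1}^n (1 − Q^k)` -/
def pochQ {F : Type} [Field F] (Q : F) (n : ℕ) : F :=
  ∏ k ∈ Finset.range n, (1 - Q ^ (k + 1))

/-- `J` is the family satisfying `J 0 = 1` and the fermionic recursion with
variables `q`, `z`. -/
def IsFerm {l : ℕ} (B : Matrix (Fin l) (Fin l) ℤ) (d : Fin l → ℕ)
    {F : Type} [Field F] (q : F) (z : Fin l → F) (J : (Fin l → ℕ) → F) : Prop :=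
  J 0 = 1 ∧ ∀ m : Fin l → ℕ, J m = ∑ a ∈ Finset.Iic m,
    (∏ i, z i ^ a i) * q ^ (W12 B d a) *
      (∏ i, pochQ (q ^ d i) (m i - a i))⁻¹ * J a

namespace S12

open Finset

variable {l : ℕ} {F : Type} [Field F]

def b2 (n : ℕ) : ℕ := ∑ k ∈ range n, k

lemma b2_succ (n : ℕ) : b2 (n+1) = b2 n + n := by simp [b2, Finset.sum_range_succ]

lemma pochQ_zero (Q : F) : pochQ Q 0 = 1 := by simp [pochQ]

lemma pochQ_succ (Q : F) (n : ℕ) : pochQ Q (n+1) = pochQ Q n * (1 - Q^(n+1)) := by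
  simp [pochQ, Finset.prod_range_succ]

lemma pochQ_ne {Q : F} (hQ : ∀ k, 1 ≤ k → (1:F) - Q^k ≠ 0) (n : ℕ) : pochQ Q n ≠ 0 := by
  refine Finset.prod_ne_zero_iff.2 fun k _ => hQ (k+1) (by omega)

/-- Gaussian binomial as a field element. -/
def gb (Q : F) (n c : ℕ) : F :=
  if c ≤ n then pochQ Q n * (pochQ Q c)⁻¹ * (pochQ Q (n - c))⁻¹ else 0

lemma gb_self {Q : F} (hQ : ∀ k, 1 ≤ k → (1:F) - Q^k ≠ 0) (n : ℕ) : gb Q n n = 1 := by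
  simp [gb, pochQ_zero, mul_inv_cancel₀ (pochQ_ne hQ n)]

lemma gb_zero {Q : F} (hQ : ∀ k, 1 ≤ k → (1:F) - Q^k ≠ 0) (n : ℕ) : gb Q n 0 = 1 := by
  simp [gb, pochQ_zero, mul_inv_cancel₀ (pochQ_ne hQ n)]

lemma gb_of_gt (Q : F) {n c : ℕ} (h : n < c) : gb Q n c = 0 := by
  simp [gb, not_le.2 h]

lemma gb_pascal {Q : F} (hQ : ∀ k, 1 ≤ k → (1:F) - Q^k ≠ 0) {n c : ℕ} (hc : c ≤ n) :
    gb Q (n+1) (c+1) = gb Q n (c+1) + Q^(n-c) * gb Q n c := by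
  rcases eq_or_lt_of_le hc with rfl | hlt
  · simp [gb_self hQ, gb_of_gt Q (Nat.lt_succ_self c)]
  · -- c + 1 ≤ n : write n = c + j + 1
    obtain ⟨j, rfl⟩ : ∃ j, n = c + j + 1 := ⟨n - c - 1, by omega⟩
    have h1 : c + j + 1 + 1 - (c + 1) = j + 1 := by omega
    have h2 : c + j + 1 - (c + 1) = j := by omega
    have h3 : c + j + 1 - c = j + 1 := by omega
    have e1 : gb Q (c+j+1+1) (c+1)
        = pochQ Q (c+j+2) * (pochQ Q (c+1))⁻¹ * (pochQ Q (j+1))⁻¹ := by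
      rw [gb, if_pos (by omega), h1]
    have e2 : gb Q (c+j+1) (c+1)
        = pochQ Q (c+j+1) * (pochQ Q (c+1))⁻¹ * (pochQ Q j)⁻¹ := by
      rw [gb, if_pos (by omega), h2]
    have e3 : gb Q (c+j+1) c
        = pochQ Q (c+j+1) * (pochQ Q c)⁻¹ * (pochQ Q (j+1))⁻¹ := by
      rw [gb, if_pos (by omega), h3]
    rw [e1, e2, e3, h3, pochQ_succ Q (c+j+1), pochQ_succ Q j, pochQ_succ Q c]
    have hc1 := pochQ_ne hQ (Q := Q) (c+1)
    have hc0 := pochQ_ne hQ (Q := Q) c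
    have hj1 := pochQ_ne hQ (Q := Q) (j+1)
    have hj0 := pochQ_ne hQ (Q := Q) j
    have hx1 : (1:F) - Q^(c+1) ≠ 0 := hQ _ (by omega)
    have hx2 : (1:F) - Q^(j+1) ≠ 0 := hQ _ (by omega)
    rw [pochQ_succ Q j, pochQ_succ Q c] at *
    field_simp
    ring

def hsum (Q : F) (n : ℕ) : F := ∑ c ∈ range (n+1), (-1:F)^c * Q^(b2 c) * gb Q n c

lemma hsum_succ {Q : F} (hQ : ∀ k, 1 ≤ k → (1:F) - Q^k ≠ 0) (n : ℕ) :
    hsum Q (n+1) = (1 - Q^n) * hsum Q n := by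
  have step : ∀ c ∈ range (n+1), (-1:F)^(c+1) * Q^(b2 (c+1)) * gb Q (n+1) (c+1)
      = -((-1:F)^c * Q^(b2 (c+1)) * gb Q n (c+1)) +
        -(Q^n * ((-1:F)^c * Q^(b2 c) * gb Q n c)) := by
    intro c hc
    rw [gb_pascal hQ (by simpa using Nat.lt_succ_iff.1 (mem_range.1 hc))]
    have : Q^(b2 (c+1)) * Q^(n - c) = Q^(b2 c) * Q^n := by
      rw [← pow_add, ← pow_add, b2_succ]
      congr 1
      have := mem_range.1 hc
      omega
    linear_combination ((-1:F)^(c+1) * gb Q n c) * this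
  have tt0 : (-1:F)^(0:ℕ) * Q^(b2 0) * gb Q (n+1) 0 = 1 := by
    simp [b2, gb_zero hQ]
  have hshift : ∑ c ∈ range (n+1), (-1:F)^(c+1) * Q^(b2 (c+1)) * gb Q n (c+1)
      = hsum Q n - 1 := by
    have h1 := Finset.sum_range_succ' (fun c => (-1:F)^c * Q^(b2 c) * gb Q n c) (n+1)
    have h2 : ∑ c ∈ range (n+1+1), (-1:F)^c * Q^(b2 c) * gb Q n c = hsum Q n := by
      rw [Finset.sum_range_succ, gb_of_gt Q (Nat.lt_succ_self n)]
      simp [hsum]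
    have h3 : (-1:F)^(0:ℕ) * Q^(b2 0) * gb Q n 0 = 1 := by simp [b2, gb_zero hQ]
    rw [h2, h3] at h1
    linear_combination -h1
  have main : hsum Q (n+1)
      = (∑ c ∈ range (n+1), (-1:F)^(c+1) * Q^(b2 (c+1)) * gb Q (n+1) (c+1)) + 1 := by
    rw [hsum, Finset.sum_range_succ' (fun c => (-1:F)^c * Q^(b2 c) * gb Q (n+1) c) (n+1), tt0]
  rw [main, Finset.sum_congr rfl step]
  rw [Finset.sum_add_distrib]
  have e1 : ∑ c ∈ range (n+1), -((-1:F)^c * Q^(b2 (c+1)) * gb Q n (c+1))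
      = hsum Q n - 1 := by
    rw [← hshift]
    exact Finset.sum_congr rfl (fun c _ => by ring)
  have e2 : ∑ c ∈ range (n+1), -(Q^n * ((-1:F)^c * Q^(b2 c) * gb Q n c))
      = -(Q^n * hsum Q n) := by
    rw [Finset.sum_neg_distrib, ← Finset.mul_sum, hsum]
  rw [e1, e2]
  ring

lemma hsum_eq_zero {Q : F} (hQ : ∀ k, 1 ≤ k → (1:F) - Q^k ≠ 0) {n : ℕ} (hn : 1 ≤ n) :
    hsum Q n = 0 := by
  induction n with
  | zero => omega
  | succ n ih =>
    rcases Nat.eq_or_lt_of_le hn with h | h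
    · -- n+1 = 1
      have hn0 : n = 0 := by omega
      subst hn0
      simp [hsum, Finset.sum_range_succ, b2, gb_zero hQ, gb_self hQ]
    · rw [hsum_succ hQ, ih (by omega), mul_zero]

/-- The key one-variable inversion identity. -/
lemma gsum_eq {Q : F} (hQ : ∀ k, 1 ≤ k → (1:F) - Q^k ≠ 0) (n : ℕ) :
    ∑ c ∈ range (n+1), (-1:F)^c * Q^(b2 c) * ((pochQ Q c)⁻¹ * (pochQ Q (n-c))⁻¹)
      = if n = 0 then 1 else 0 := by
  rcases Nat.eq_zero_or_pos n with rfl | hn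
  · simp [pochQ_zero, b2]
  · rw [if_neg (by omega)]
    have key : ∀ c ∈ range (n+1),
        (-1:F)^c * Q^(b2 c) * ((pochQ Q c)⁻¹ * (pochQ Q (n-c))⁻¹)
          = (pochQ Q n)⁻¹ * ((-1:F)^c * Q^(b2 c) * gb Q n c) := by
      intro c hc
      rw [gb, if_pos (Nat.lt_succ_iff.1 (Finset.mem_range.1 hc))]
      field_simp
      rw [mul_div_mul_right _ _ (pochQ_ne hQ n)]
    rw [Finset.sum_congr rfl key, ← Finset.mul_sum, ← hsum, hsum_eq_zero hQ hn, mul_zero]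




variable {l : ℕ} {F : Type} [Field F]

lemma pochQ_inv {Q : F} (hQ0 : Q ≠ 0) (n : ℕ) :
    pochQ Q⁻¹ n = (-1 : F)^n * (Q ^ (b2 n + n))⁻¹ * pochQ Q n := by
  induction n with
  | zero => simp [pochQ_zero, b2]
  | succ n ih =>
    rw [pochQ_succ, pochQ_succ, ih, b2_succ]
    have h1 : (1 : F) - Q⁻¹ ^ (n+1) = -(Q^(n+1))⁻¹ * (1 - Q^(n+1)) := by
      rw [inv_pow]
      field_simp
      ring
    rw [h1]
    have hq2 : Q ^ (b2 n + n) ≠ 0 := pow_ne_zero _ hQ0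
    have hq3 : Q ^ (n + 1) ≠ 0 := pow_ne_zero _ hQ0
    have hq4 : Q ^ (b2 n + n + (n + 1)) ≠ 0 := pow_ne_zero _ hQ0
    have hsplit : (Q ^ (b2 n + n + (n + 1)))⁻¹ = (Q^(b2 n + n))⁻¹ * (Q^(n+1))⁻¹ := by
      rw [pow_add, mul_inv]
    rw [hsplit]
    ring

/-- `∑ d_i m_i` as an integer. -/
def Dz (d : Fin l → ℕ) (m : Fin l → ℕ) : ℤ := ∑ i, (d i : ℤ) * m i

lemma qDz (q : F) (d : Fin l → ℕ) (a : Fin l → ℕ) :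
    q ^ (Dz d a) = ∏ i, (q ^ d i) ^ a i := by
  have h : Dz d a = ((∑ i, d i * a i : ℕ) : ℤ) := by
    rw [Dz, Nat.cast_sum]
    exact Finset.sum_congr rfl fun i _ => by push_cast; ring
  rw [h, zpow_natCast, ← Finset.prod_pow_eq_pow_sum]
  exact Finset.prod_congr rfl fun i _ => (pow_mul q (d i) (a i))

lemma Dz_add {d : Fin l → ℕ} {a b m : Fin l → ℕ} (hab : ∀ i, a i + b i = m i) :
    Dz d a + Dz d b = Dz d m := by
  rw [Dz, Dz, Dz, ← Finset.sum_add_distrib]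
  exact Finset.sum_congr rfl fun i _ => by rw [← hab i]; push_cast; ring



section R2

variable {B : Matrix (Fin l) (Fin l) ℤ} {d : Fin l → ℕ} {q : F} {z : Fin l → F}
  {J : (Fin l → ℕ) → F}

/-- The dual ("reversed") recursion satisfied by a fermionic family. -/
lemma R2 (hQ : ∀ i (k : ℕ), 1 ≤ k → (1:F) - (q ^ d i) ^ k ≠ 0)
    (hJ : IsFerm B d q z J) (m : Fin l → ℕ) :
    ∑ a ∈ Finset.Iic m,
      (∏ i, ((-1:F)^(m i - a i) * (q ^ d i)^(b2 (m i - a i) + (m i - a i))))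
        * (∏ i, pochQ (q ^ d i) (m i - a i))⁻¹ * q ^ (Dz d a) * J a
    = q ^ (Dz d m) * ((∏ i, z i ^ m i) * q ^ (W12 B d m) * J m) := by
  -- the coefficient in front of `J a`
  set C : (Fin l → ℕ) → F := fun a =>
    (∏ i, ((-1:F)^(m i - a i) * (q ^ d i)^(b2 (m i - a i) + (m i - a i))))
      * (∏ i, pochQ (q ^ d i) (m i - a i))⁻¹ * q ^ (Dz d a) with hC
  have expand : ∀ a ∈ Finset.Iic m, C a * J a
      = ∑ b ∈ Finset.Iic a,
          C a * ((∏ i, z i ^ b i) * q ^ (W12 B d b) *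
            (∏ i, pochQ (q ^ d i) (a i - b i))⁻¹ * J b) := by
    intro a _
    rw [hJ.2 a, Finset.mul_sum]
  rw [Finset.sum_congr rfl expand]
  rw [Finset.sum_comm' (t' := Finset.Iic m) (s' := fun b => Finset.Icc b m)
    (by
      intro a b
      simp only [Finset.mem_Iic, Finset.mem_Icc]
      constructor
      · rintro ⟨h1, h2⟩; exact ⟨⟨h2, h1⟩, le_trans h2 h1⟩
      · rintro ⟨⟨h1, h2⟩, h3⟩; exact ⟨h2, h1⟩)]
  have inner : ∀ b ∈ Finset.Iic m,
      (∑ a ∈ Finset.Icc b m,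
        C a * ((∏ i, z i ^ b i) * q ^ (W12 B d b) *
          (∏ i, pochQ (q ^ d i) (a i - b i))⁻¹ * J b))
      = if b = m then q ^ (Dz d m) * ((∏ i, z i ^ b i) * q ^ (W12 B d b) * J b) else 0 := by
    intro b hb
    have hbm : b ≤ m := Finset.mem_Iic.1 hb
    -- the per-coordinate function
    set g : Fin l → ℕ → F := fun i x =>
      (-1:F)^(m i - x) * (q ^ d i)^(b2 (m i - x) + (m i - x)) *
        (pochQ (q ^ d i) (m i - x))⁻¹ * (pochQ (q ^ d i) (x - b i))⁻¹ *
        (q ^ d i) ^ x with hg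
    have hCT : ∀ a ∈ Finset.Icc b m,
        C a * ((∏ i, z i ^ b i) * q ^ (W12 B d b) *
          (∏ i, pochQ (q ^ d i) (a i - b i))⁻¹ * J b)
        = (∏ i, g i (a i)) * ((∏ i, z i ^ b i) * q ^ (W12 B d b) * J b) := by
      intro a _
      have hmerge : (∏ i, ((-1:F)^(m i - a i) * (q ^ d i)^(b2 (m i - a i) + (m i - a i))))
          * (∏ i, (pochQ (q ^ d i) (m i - a i))⁻¹)
          * (∏ i, (pochQ (q ^ d i) (a i - b i))⁻¹)
          * (∏ i, (q ^ d i) ^ a i)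
          = ∏ i, g i (a i) := by
        rw [← Finset.prod_mul_distrib, ← Finset.prod_mul_distrib, ← Finset.prod_mul_distrib]
      simp only [hC]
      rw [qDz q d a, ← hmerge, ← Finset.prod_inv_distrib, ← Finset.prod_inv_distrib]
      ring
    rw [Finset.sum_congr rfl hCT, ← Finset.sum_mul]
    have hfact : (∑ a ∈ Finset.Icc b m, ∏ i, g i (a i))
        = q ^ (Dz d m) * (if b = m then 1 else 0) := by
      rw [Pi.Icc_eq, ← Finset.prod_univ_sum]
      have coord : ∀ i : Fin l, (∑ x ∈ Finset.Icc (b i) (m i), g i x)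
          = (q ^ d i) ^ (m i) * (if m i - b i = 0 then 1 else 0) := by
        intro i
        have hbi : b i ≤ m i := hbm i
        obtain ⟨n, hn⟩ : ∃ n, m i - b i = n := ⟨_, rfl⟩
        have reind : (∑ x ∈ Finset.Icc (b i) (m i), g i x)
            = ∑ c ∈ Finset.range (n + 1),
                (q ^ d i) ^ (m i) *
                  ((-1:F)^c * (q ^ d i)^(b2 c) *
                    ((pochQ (q ^ d i) c)⁻¹ * (pochQ (q ^ d i) (n - c))⁻¹)) := by
          refine Finset.sum_nbij' (fun x => m i - x) (fun c => m i - c) ?_ ?_ ?_ ?_ ?_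
          · intro x hx
            simp only [Finset.mem_Icc] at hx
            simp only [Finset.mem_range]
            omega
          · intro c hc
            simp only [Finset.mem_range] at hc
            simp only [Finset.mem_Icc]
            omega
          · intro x hx
            simp only [Finset.mem_Icc] at hx
            omega
          · intro c hc
            simp only [Finset.mem_range] at hc
            omega
          · intro x hx
            simp only [Finset.mem_Icc] at hx
            simp only [hg]
            have e1 : m i - (m i - x) = x := by omega
            have e2 : x - b i = n - (m i - x) := by omega
            have e3 : (q ^ d i) ^ (b2 (m i - x) + (m i - x)) * (q ^ d i) ^ x
                = (q ^ d i) ^ (m i) * (q ^ d i) ^ (b2 (m i - x)) := by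
              rw [← pow_add, ← pow_add]
              congr 1
              omega
            rw [e2]
            calc (-1:F)^(m i - x) * (q ^ d i)^(b2 (m i - x) + (m i - x)) *
                  (pochQ (q ^ d i) (m i - x))⁻¹ * (pochQ (q ^ d i) (n - (m i - x)))⁻¹ *
                  (q ^ d i) ^ x
                = ((q ^ d i) ^ (b2 (m i - x) + (m i - x)) * (q ^ d i) ^ x) *
                  ((-1:F)^(m i - x) * (pochQ (q ^ d i) (m i - x))⁻¹ *
                    (pochQ (q ^ d i) (n - (m i - x)))⁻¹) := by ring
              _ = _ := by rw [e3]; ring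
        rw [reind, ← Finset.mul_sum, gsum_eq (hQ i) n, hn]
      rw [Finset.prod_congr rfl (fun i _ => coord i), Finset.prod_mul_distrib,
        Finset.prod_boole, ← qDz q d m]
      congr 1
      by_cases hbeq : b = m
      · subst hbeq; simp
      · have hne : ¬ (∀ i ∈ Finset.univ, m i - b i = 0) := by
          intro hall
          apply hbeq
          funext i
          have h1 : m i ≤ b i := Nat.sub_eq_zero_iff_le.1 (hall i (Finset.mem_univ i))
          exact Nat.le_antisymm (hbm i) h1
        rw [if_neg hne, if_neg hbeq]
    rw [hfact]
    by_cases hbeq : b = m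
    · subst hbeq; simp
    · simp [hbeq]
  rw [Finset.sum_congr rfl inner, Finset.sum_ite_eq' (Finset.Iic m) m
    (fun b => q ^ (Dz d m) * ((∏ i, z i ^ b i) * q ^ (W12 B d b) * J b)),
    if_pos (Finset.mem_Iic.2 le_rfl)]

end R2

section Main

variable {B : Matrix (Fin l) (Fin l) ℤ} {d : Fin l → ℕ} {q : F} {z : Fin l → F}
  {J : (Fin l → ℕ) → F}

lemma W12_zero (B : Matrix (Fin l) (Fin l) ℤ) (d : Fin l → ℕ) : W12 B d 0 = 0 := by
  simp [W12]

lemma Dz_zero (d : Fin l → ℕ) : Dz (l := l) d 0 = 0 := by simp [Dz]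

lemma sigma_poch_prod_inv (σ : F ≃+* F) (hσq : σ q = q⁻¹) (hq0 : q ≠ 0) (c : Fin l → ℕ) :
    (σ (∏ i, pochQ (q ^ d i) (c i)))⁻¹
      = (∏ i, ((-1:F)^(c i) * (q ^ d i)^(b2 (c i) + c i)))
          * (∏ i, pochQ (q ^ d i) (c i))⁻¹ := by
  rw [map_prod]
  have e1 : ∀ i : Fin l, σ (pochQ (q ^ d i) (c i))
      = (-1:F)^(c i) * ((q ^ d i) ^ (b2 (c i) + c i))⁻¹ * pochQ (q ^ d i) (c i) := by
    intro i
    have : σ (pochQ (q ^ d i) (c i)) = pochQ ((q ^ d i)⁻¹) (c i) := by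
      rw [pochQ, pochQ, map_prod]
      refine Finset.prod_congr rfl fun k _ => ?_
      rw [map_sub, map_one, map_pow, map_pow, hσq, inv_pow]
    rw [this, pochQ_inv (pow_ne_zero _ hq0)]
  rw [Finset.prod_congr rfl fun i _ => e1 i, ← Finset.prod_inv_distrib,
    ← Finset.prod_inv_distrib, ← Finset.prod_mul_distrib]
  refine Finset.prod_congr rfl fun i _ => ?_
  rw [mul_inv, mul_inv, inv_inv]
  have h2 : ((-1:F) ^ (c i))⁻¹ = (-1:F) ^ (c i) := by
    rw [← inv_pow, inv_neg_one]
  rw [h2]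

lemma sigmaJ (σ : F ≃+* F) (hσq : σ q = q⁻¹) (hσz : ∀ i, σ (z i) = (z i)⁻¹)
    (hq0 : q ≠ 0)
    (hQ : ∀ i (k : ℕ), 1 ≤ k → (1:F) - (q ^ d i) ^ k ≠ 0)
    (hz0 : ∀ i, z i ≠ 0)
    (hmono : ∀ m : Fin l → ℕ, m ≠ 0 → ∀ t : ℤ, (∏ i, z i ^ m i) * q ^ t ≠ 1)
    (hJ : IsFerm B d q z J) :
    ∀ m, σ (J m) = (∏ i, z i ^ m i) * q ^ (W12 B d m + Dz d m) * J m := by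
  have hzp : ∀ a : Fin l → ℕ, (∏ i, z i ^ a i) ≠ 0 :=
    fun a => Finset.prod_ne_zero_iff.2 fun i _ => pow_ne_zero _ (hz0 i)
  have hσzp : ∀ a : Fin l → ℕ, σ (∏ i, z i ^ a i) = (∏ i, z i ^ a i)⁻¹ := by
    intro a
    rw [map_prod, ← Finset.prod_inv_distrib]
    exact Finset.prod_congr rfl fun i _ => by rw [map_pow, hσz i, inv_pow]
  have hσq' : ∀ t : ℤ, σ (q ^ t) = (q ^ t)⁻¹ := fun t => by
    rw [map_zpow₀, hσq, inv_zpow]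
  have key : ∀ N : ℕ, ∀ m : Fin l → ℕ, (∑ i, m i) = N →
      σ (J m) = (∏ i, z i ^ m i) * q ^ (W12 B d m + Dz d m) * J m := by
    intro N
    induction N using Nat.strong_induction_on with
    | _ N ih =>
      intro m hmN
      by_cases hm0 : m = 0
      · subst hm0
        rw [hJ.1, map_one, W12_zero, Dz_zero]
        simp
      · -- main case
        have hrec : σ (J m) = ∑ a ∈ Finset.Iic m,
            σ ((∏ i, z i ^ a i) * q ^ (W12 B d a) *
              (∏ i, pochQ (q ^ d i) (m i - a i))⁻¹ * J a) := by
          rw [← map_sum, ← hJ.2 m]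
        rw [Finset.sum_eq_sum_sdiff_singleton_add (Finset.mem_Iic.2 (le_refl m))] at hrec
        -- transform the generic term using the inductive hypothesis
        have hterm : ∀ a ∈ Finset.Iic m \ {m},
            σ ((∏ i, z i ^ a i) * q ^ (W12 B d a) *
              (∏ i, pochQ (q ^ d i) (m i - a i))⁻¹ * J a)
            = (∏ i, ((-1:F)^(m i - a i) * (q ^ d i)^(b2 (m i - a i) + (m i - a i))))
                * (∏ i, pochQ (q ^ d i) (m i - a i))⁻¹ * q ^ (Dz d a) * J a := by
          intro a ha
          rw [Finset.mem_sdiff, Finset.mem_Iic, Finset.mem_singleton] at ha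
          obtain ⟨ham, hane⟩ := ha
          have hlt : (∑ i, a i) < N := by
            rw [← hmN]
            refine Finset.sum_lt_sum (fun i _ => ham i) ?_
            obtain ⟨i, hi⟩ := Function.ne_iff.1 hane
            exact ⟨i, Finset.mem_univ i, lt_of_le_of_ne (ham i) hi⟩
          have hih := ih _ hlt a rfl
          rw [map_mul, map_mul, map_mul, map_inv₀, hσzp a, hσq' (W12 B d a),
            sigma_poch_prod_inv σ hσq hq0, hih, zpow_add₀ hq0]
          have hzne := hzp a
          have hqne : (q : F) ^ (W12 B d a) ≠ 0 := zpow_ne_zero _ hq0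
          calc (∏ i, z i ^ a i)⁻¹ * (q ^ W12 B d a)⁻¹ *
                ((∏ i, ((-1:F)^(m i - a i) * (q ^ d i)^(b2 (m i - a i) + (m i - a i))))
                  * (∏ i, pochQ (q ^ d i) (m i - a i))⁻¹) *
                ((∏ i, z i ^ a i) * (q ^ W12 B d a * q ^ Dz d a) * J a)
              = ((∏ i, z i ^ a i)⁻¹ * (∏ i, z i ^ a i)) *
                ((q ^ W12 B d a)⁻¹ * q ^ W12 B d a) *
                ((∏ i, ((-1:F)^(m i - a i) * (q ^ d i)^(b2 (m i - a i) + (m i - a i))))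
                  * (∏ i, pochQ (q ^ d i) (m i - a i))⁻¹ * q ^ Dz d a * J a) := by ring
            _ = _ := by
                rw [inv_mul_cancel₀ hzne, inv_mul_cancel₀ hqne, one_mul, one_mul]
        rw [Finset.sum_congr rfl hterm] at hrec
        -- the diagonal term
        have hmterm : σ ((∏ i, z i ^ m i) * q ^ (W12 B d m) *
              (∏ i, pochQ (q ^ d i) (m i - m i))⁻¹ * J m)
            = ((∏ i, z i ^ m i) * q ^ (W12 B d m))⁻¹ * σ (J m) := by
          have h0 : (∏ i, pochQ (q ^ d i) (m i - m i)) = (1:F) := by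
            simp [Nat.sub_self, pochQ_zero]
          rw [h0, inv_one, mul_one, map_mul, map_mul, hσzp m, hσq' (W12 B d m), mul_inv]
        rw [hmterm] at hrec
        -- use the dual recursion R2
        have hfull := R2 hQ hJ m
        rw [Finset.sum_eq_sum_sdiff_singleton_add (Finset.mem_Iic.2 (le_refl m))] at hfull
        have hR2m : (∏ i, ((-1:F)^(m i - m i) * (q ^ d i)^(b2 (m i - m i) + (m i - m i))))
            * (∏ i, pochQ (q ^ d i) (m i - m i))⁻¹ * q ^ (Dz d m) * J m
            = q ^ (Dz d m) * J m := by
          simp [Nat.sub_self, pochQ_zero, b2]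
        rw [hR2m] at hfull
        -- solve for σ (J m)
        have hu0 : (∏ i, z i ^ m i) * q ^ (W12 B d m) ≠ 0 :=
          mul_ne_zero (hzp m) (zpow_ne_zero _ hq0)
        have hu1 : (∏ i, z i ^ m i) * q ^ (W12 B d m) ≠ 1 := hmono m hm0 _
        have heq : ((∏ i, z i ^ m i) * q ^ (W12 B d m) - 1) * σ (J m)
            = ((∏ i, z i ^ m i) * q ^ (W12 B d m) - 1) *
              (((∏ i, z i ^ m i) * q ^ (W12 B d m)) * q ^ (Dz d m) * J m) := by
          linear_combination ((∏ i, z i ^ m i) * q ^ (W12 B d m)) * hrec +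
            ((∏ i, z i ^ m i) * q ^ (W12 B d m)) * hfull +
            σ (J m) * mul_inv_cancel₀ hu0
        have hfin := mul_left_cancel₀ (sub_ne_zero.2 hu1) heq
        rw [hfin, zpow_add₀ hq0]
        ring
  exact fun m => key (∑ i, m i) m rfl

end Main

section F12facts

variable {l : ℕ}

local notation "R12" => MvPolynomial (Option (Fin l ⊕ Fin l)) ℚ

lemma alg_inj : Function.Injective (algebraMap R12 (F12 l)) :=
  IsFractionRing.injective _ _

lemma q12_ne : q12 l ≠ 0 := by
  rw [q12, Ne, map_eq_zero_iff _ alg_inj]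
  exact MvPolynomial.X_ne_zero none

lemma q12_pow_ne (k : ℕ) (hk : 1 ≤ k) : (q12 l) ^ k ≠ 1 := by
  intro h
  rw [q12, ← map_pow, show (1 : F12 l) = algebraMap R12 (F12 l) 1 from (map_one _).symm] at h
  have h2 := alg_inj h
  have h3 := congrArg (MvPolynomial.eval (fun v => (2:ℚ))) h2
  rw [map_pow, MvPolynomial.eval_X, map_one] at h3
  have : (1:ℚ) < 2 ^ k := one_lt_pow₀ (by norm_num) (by omega)
  rw [h3] at this
  exact lt_irrefl _ this

lemma hQ12 (d : Fin l → ℕ) (hd : ∀ i, 0 < d i) :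
    ∀ i (k : ℕ), 1 ≤ k → (1 : F12 l) - ((q12 l) ^ d i) ^ k ≠ 0 := by
  intro i k hk
  rw [← pow_mul]
  exact sub_ne_zero.2 (Ne.symm (q12_pow_ne _ (Nat.mul_pos (hd i) hk)))

lemma hmono_gen (ι : Fin l → Option (Fin l ⊕ Fin l)) (hinj : Function.Injective ι)
    (hne : ∀ i, ι i ≠ none) (m : Fin l → ℕ) (hm : m ≠ 0) (t : ℤ) :
    (∏ i, (algebraMap R12 (F12 l) (MvPolynomial.X (ι i))) ^ m i) * (q12 l) ^ t ≠ 1 := by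
  intro h
  obtain ⟨i₀, hi₀⟩ : ∃ i, m i ≠ 0 := by
    by_contra hc
    push_neg at hc
    exact hm (funext fun i => hc i)
  set P : R12 := ∏ i, MvPolynomial.X (ι i) ^ m i with hP
  have hPalg : (∏ i, (algebraMap R12 (F12 l) (MvPolynomial.X (ι i))) ^ m i)
      = algebraMap R12 (F12 l) P := by
    rw [hP, map_prod]
    exact Finset.prod_congr rfl fun i _ => (map_pow _ _ _).symm
  set s1 : ℕ := t.toNat with hs1
  set s2 : ℕ := (-t).toNat with hs2
  have hts : (s1 : ℤ) - s2 = t := by omega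
  have hqt : (q12 l) ^ t = (q12 l) ^ s1 / (q12 l) ^ s2 := by
    rw [← zpow_natCast (q12 l) s1, ← zpow_natCast (q12 l) s2, ← zpow_sub₀ q12_ne, hts]
  rw [hPalg, hqt] at h
  have hq2ne : (q12 l) ^ s2 ≠ 0 := pow_ne_zero _ q12_ne
  have h4 : algebraMap R12 (F12 l) (P * MvPolynomial.X none ^ s1)
      = algebraMap R12 (F12 l) (MvPolynomial.X none ^ s2) := by
    rw [map_mul, map_pow, map_pow, ← q12]
    field_simp at h
    linear_combination h
  have h5 := alg_inj h4
  have h6 := congrArg (MvPolynomial.eval (fun v => if v = ι i₀ then (2:ℚ) else 1)) h5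
  simp only [map_mul, map_pow, MvPolynomial.eval_X] at h6
  have hnone : (if (none : Option (Fin l ⊕ Fin l)) = ι i₀ then (2:ℚ) else 1) = 1 :=
    if_neg (Ne.symm (hne i₀))
  have hevP : MvPolynomial.eval (fun v => if v = ι i₀ then (2:ℚ) else 1) P = 2 ^ m i₀ := by
    rw [hP, map_prod]
    have e : ∀ i : Fin l, MvPolynomial.eval (fun v => if v = ι i₀ then (2:ℚ) else 1)
        (MvPolynomial.X (ι i) ^ m i) = if i = i₀ then 2 ^ m i else 1 := by
      intro i
      rw [map_pow, MvPolynomial.eval_X]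
      by_cases hii : i = i₀
      · subst hii; simp
      · rw [if_neg (fun hcc => hii (hinj hcc)), if_neg hii, one_pow]
    rw [Finset.prod_congr rfl fun i _ => e i, Finset.prod_ite_eq' Finset.univ i₀
      (fun i => (2:ℚ) ^ m i), if_pos (Finset.mem_univ i₀)]
  rw [hevP, hnone, one_pow, one_pow, mul_one] at h6
  have : (1:ℚ) < 2 ^ m i₀ := one_lt_pow₀ (by norm_num) (by omega)
  rw [h6] at this
  exact lt_irrefl _ this

end F12facts

end S12

open S12 in
theorem stmt_12 (l : ℕ) (hl : 1 ≤ l) (B : Matrix (Fin l) (Fin l) ℤ) (d : Fin l → ℕ)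
    (hsym : B.IsSymm) (hdpos : ∀ i, 0 < d i) (hdiag : ∀ i, B i i = 2 * d i)
    (hoff : ∀ i j, i ≠ j → B i j ≤ 0) (hdvd : ∀ i j, (d i : ℤ) ∣ B i j)
    (hposdef : ∀ x : Fin l → ℤ, x ≠ 0 → 0 < ∑ i, ∑ j, B i j * x i * x j)
    (Jz Jw : (Fin l → ℕ) → F12 l)
    (hJz : IsFerm B d (q12 l) (z12 l) Jz)
    (hJw : IsFerm B d (q12 l) (w12 l) Jw)
    (σ : F12 l ≃+* F12 l) (hq : σ (q12 l) = (q12 l)⁻¹)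
    (hz : ∀ i, σ (z12 l i) = (z12 l i)⁻¹)
    (hw : ∀ i, σ (w12 l i) = (w12 l i)⁻¹) :
    ∀ m : Fin l → ℕ,
      σ (∑ a ∈ Finset.Iic m,
          Jz (m - a) * Jw a * q12 l ^ (W12 B d a) * ∏ i, w12 l i ^ a i)
      = q12 l ^ (∑ i, (d i : ℤ) * m i) *
        ∑ a ∈ Finset.Iic m,
          Jw (m - a) * Jz a * q12 l ^ (W12 B d a) * ∏ i, z12 l i ^ a i := by
  intro m
  have hq0 : q12 l ≠ 0 := q12_ne
  have hQ := hQ12 d hdpos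
  have hz0 : ∀ i, z12 l i ≠ 0 := fun i => by
    rw [z12, Ne, map_eq_zero_iff _ alg_inj]
    exact MvPolynomial.X_ne_zero _
  have hw0 : ∀ i, w12 l i ≠ 0 := fun i => by
    rw [w12, Ne, map_eq_zero_iff _ alg_inj]
    exact MvPolynomial.X_ne_zero _
  have hmz : ∀ a : Fin l → ℕ, a ≠ 0 → ∀ t : ℤ, (∏ i, z12 l i ^ a i) * (q12 l) ^ t ≠ 1 :=
    fun a ha t => hmono_gen (fun i => some (Sum.inl i))
      (fun i j hij => by simpa using hij) (fun i => by simp) a ha t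
  have hmw : ∀ a : Fin l → ℕ, a ≠ 0 → ∀ t : ℤ, (∏ i, w12 l i ^ a i) * (q12 l) ^ t ≠ 1 :=
    fun a ha t => hmono_gen (fun i => some (Sum.inr i))
      (fun i j hij => by simpa using hij) (fun i => by simp) a ha t
  have hσJz := sigmaJ σ hq hz hq0 hQ hz0 hmz hJz
  have hσJw := sigmaJ σ hq hw hq0 hQ hw0 hmw hJw
  have hσq' : ∀ t : ℤ, σ (q12 l ^ t) = (q12 l ^ t)⁻¹ := fun t => by
    rw [map_zpow₀, hq, inv_zpow]
  have hσwp : ∀ a : Fin l → ℕ, σ (∏ i, w12 l i ^ a i) = (∏ i, w12 l i ^ a i)⁻¹ := by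
    intro a
    rw [map_prod, ← Finset.prod_inv_distrib]
    exact Finset.prod_congr rfl fun i _ => by rw [map_pow, hw i, inv_pow]
  rw [map_sum]
  have hsummand : ∀ a ∈ Finset.Iic m,
      σ (Jz (m - a) * Jw a * q12 l ^ (W12 B d a) * ∏ i, w12 l i ^ a i)
      = q12 l ^ (Dz d m) *
          (Jw a * Jz (m - a) * q12 l ^ (W12 B d (m - a)) * ∏ i, z12 l i ^ ((m - a) i)) := by
    intro a ha
    have ham : a ≤ m := Finset.mem_Iic.1 ha
    have hDz : Dz d (m - a) + Dz d a = Dz d m :=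
      Dz_add (fun i => Nat.sub_add_cancel (ham i))
    rw [map_mul, map_mul, map_mul, hσJz (m - a), hσJw a, hσq' (W12 B d a), hσwp a,
      zpow_add₀ hq0 (W12 B d (m - a)) (Dz d (m - a)), zpow_add₀ hq0 (W12 B d a) (Dz d a)]
    have hwne : (∏ i, w12 l i ^ a i) ≠ 0 :=
      Finset.prod_ne_zero_iff.2 fun i _ => pow_ne_zero _ (hw0 i)
    have hqWa : q12 l ^ (W12 B d a) ≠ 0 := zpow_ne_zero _ hq0
    calc (∏ i, z12 l i ^ ((m - a) i)) *
          (q12 l ^ (W12 B d (m - a)) * q12 l ^ (Dz d (m - a))) * Jz (m - a) *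
          ((∏ i, w12 l i ^ a i) * (q12 l ^ (W12 B d a) * q12 l ^ (Dz d a)) * Jw a) *
          (q12 l ^ (W12 B d a))⁻¹ * (∏ i, w12 l i ^ a i)⁻¹
        = ((∏ i, w12 l i ^ a i) * (∏ i, w12 l i ^ a i)⁻¹) *
          ((q12 l ^ (W12 B d a)) * (q12 l ^ (W12 B d a))⁻¹) *
          ((q12 l ^ (Dz d (m - a))) * (q12 l ^ (Dz d a))) *
          (Jw a * Jz (m - a) * q12 l ^ (W12 B d (m - a)) * ∏ i, z12 l i ^ ((m - a) i)) := by
          ring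
      _ = _ := by
          rw [mul_inv_cancel₀ hwne, mul_inv_cancel₀ hqWa, one_mul, one_mul,
            ← zpow_add₀ hq0, hDz]
  rw [Finset.sum_congr rfl hsummand, ← Finset.mul_sum]
  have hDzm : q12 l ^ (Dz d m) = q12 l ^ (∑ i, (d i : ℤ) * m i) := rfl
  rw [hDzm]
  congr 1
  refine Finset.sum_nbij' (fun a => m - a) (fun b => m - b) ?_ ?_ ?_ ?_ ?_
  · intro a _
    exact Finset.mem_Iic.2 fun i => Nat.sub_le _ _
  · intro b _
    exact Finset.mem_Iic.2 fun i => Nat.sub_le _ _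
  · intro a ha
    have ham := Finset.mem_Iic.1 ha
    funext i
    exact Nat.sub_sub_self (ham i)
  · intro b hb
    have hbm := Finset.mem_Iic.1 hb
    funext i
    exact Nat.sub_sub_self (hbm i)
  · intro a ha
    have ham := Finset.mem_Iic.1 ha
    have e : m - (m - a) = a := funext fun i => Nat.sub_sub_self (ham i)
    rw [e]

end
end

section
/- In the field ℚ(q, z_1,…,z_l, u_1,…,u_l) the following recursion holds for every m ∈ ℕ^l: J_m(z) = ∑_{0 ≤ a ≤ m} X_a(z, u^{−1}·q^{−Ca+2}) · J_{m−a}(u·q^{Ca}), where u^{−1}·q^{−Ca+2} denotes substituting w_i = u_i^{−1} q^{−(Ca)_i + 2} into the second group of variables of X_a, u·q^{Ca} denotes substituting z_i = u_i q^{(Ca)_i} into J_{m−a}, and (Ca)_i = ∑_j C_{ij} a_j. (In the notation of the paper this is the identity J^λ_β = ∑_{α} X^{λ, α−μ−2ρ}_α J^{μ−α}_{β−α} for arbitrary weights λ, μ; it proves that the quasi-classical decomposition of the fermionic sum is exact.) -/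
/- STATEMENT 13: exactness of the quasi-classical decomposition: in
   ℚ(q,z_1,…,z_l,u_1,…,u_l),
     J_m(z) = ∑_{0≤a≤m} X_a(z, u⁻¹·q^{−Ca+2}) · J_{m−a}(u·q^{Ca}),
   where X_a(z,w) = ∑_{0≤b≤a} J_{a−b}(z) J_b(w) q^{W(b)} w^b, (J_m) is the
   unique family solving the fermionic recursion in the indicated variables,
   and C is a simply-laced Cartan matrix. -/

noncomputable section

open scoped BigOperators

/-- The field ℚ(q, z_1, …, z_l, u_1, …, u_l). -/
abbrev F13 (l : ℕ) : Type :=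
  FractionRing (MvPolynomial (Option (Fin l ⊕ Fin l)) ℚ)

/-- the variable q -/
def q13 (l : ℕ) : F13 l :=
  algebraMap (MvPolynomial (Option (Fin l ⊕ Fin l)) ℚ) (F13 l) (MvPolynomial.X none)

/-- the variables z_i -/
def z13 (l : ℕ) (i : Fin l) : F13 l :=
  algebraMap (MvPolynomial (Option (Fin l ⊕ Fin l)) ℚ) (F13 l)
    (MvPolynomial.X (some (Sum.inl i)))

/-- the variables u_i -/
def u13 (l : ℕ) (i : Fin l) : F13 l :=
  algebraMap (MvPolynomial (Option (Fin l ⊕ Fin l)) ℚ) (F13 l)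
    (MvPolynomial.X (some (Sum.inr i)))

/-- `W(a) = (1/2)∑ C_{ij} a_i a_j − ∑ a_i`  (the double sum is even, so integer
division by 2 gives the exact value). -/
def W13 {l : ℕ} (C : Matrix (Fin l) (Fin l) ℤ) (a : Fin l → ℕ) : ℤ :=
  (∑ i, ∑ j, C i j * a i * a j) / 2 - ∑ i, (a i : ℤ)

/-- `(Ca)_i = ∑_j C_{ij} a_j` -/
def Cv {l : ℕ} (C : Matrix (Fin l) (Fin l) ℤ) (a : Fin l → ℕ) (i : Fin l) : ℤ :=
  ∑ j, C i j * a j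

/-- `(q)_n = ∏_{k=1}^n (1 − q^k)` -/
def qP {F : Type} [Field F] (q : F) (n : ℕ) : F :=
  ∏ k ∈ Finset.range n, (1 - q ^ (k + 1))

/-- `J` is the family satisfying `J 0 = 1` and the fermionic recursion with
variables `q`, `z` (simply-laced case). -/
def IsFermC {l : ℕ} (C : Matrix (Fin l) (Fin l) ℤ)
    {F : Type} [Field F] (q : F) (z : Fin l → F) (J : (Fin l → ℕ) → F) : Prop :=
  J 0 = 1 ∧ ∀ m : Fin l → ℕ, J m = ∑ a ∈ Finset.Iic m,
    (∏ i, z i ^ a i) * q ^ (W13 C a) *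
      (∏ i, qP q (m i - a i))⁻¹ * J a

namespace Aux13
open Finset

variable {l : ℕ} {C : Matrix (Fin l) (Fin l) ℤ}

lemma even_sum (hsym : C.IsSymm) (hdiag : ∀ i, C i i = 2) (a : Fin l → ℕ) :
    (2:ℤ) ∣ ∑ i, ∑ j, C i j * a i * a j := by
  have h0 : ((∑ i, ∑ j, C i j * a i * a j : ℤ) : ZMod 2) = 0 := by
    push_cast
    rw [← Finset.sum_product']
    refine Finset.sum_involution (fun p _ => p.swap) ?_ ?_ (fun p _ => by simp) ?_
    · intro p _
      have hs : ((C p.2 p.1 : ℤ) : ZMod 2) = ((C p.1 p.2 : ℤ) : ZMod 2) := by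
        rw [hsym.apply]
      have : ((C p.swap.1 p.swap.2 : ℤ) : ZMod 2) * (a p.swap.1 : ZMod 2) * (a p.swap.2 : ZMod 2)
          = ((C p.1 p.2 : ℤ) : ZMod 2) * (a p.1 : ZMod 2) * (a p.2 : ZMod 2) := by
        simp only [Prod.swap]
        rw [hs]; ring
      rw [this]
      exact CharTwo.add_self_eq_zero _
    · intro p _ hf
      intro hswap
      apply hf
      have hp : p.1 = p.2 := by
        have := congrArg Prod.fst hswap
        simpa [Prod.swap] using this.symm
      rw [← hp, hdiag p.1]
      have h2 : ((2:ℤ) : ZMod 2) = 0 := by decide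
      rw [h2, zero_mul, zero_mul]
    · intro p _; simp
  exact_mod_cast (ZMod.intCast_zmod_eq_zero_iff_dvd _ 2).mp h0


lemma W13_zero : W13 C 0 = 0 := by simp [W13]

lemma two_W13 (hsym : C.IsSymm) (hdiag : ∀ i, C i i = 2) (a : Fin l → ℕ) :
    2 * W13 C a = (∑ i, ∑ j, C i j * a i * a j) - 2 * ∑ i, (a i : ℤ) := by
  unfold W13
  rw [mul_sub, Int.mul_ediv_cancel' (even_sum hsym hdiag a)]

lemma W13_sub (hsym : C.IsSymm) (hdiag : ∀ i, C i i = 2) {b n : Fin l → ℕ} (h : b ≤ n) :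
    W13 C (n - b) = W13 C n + W13 C b + ∑ i, (2 - Cv C n i) * (b i : ℤ) := by
  have hc : ∀ i : Fin l, (((n - b) i : ℕ) : ℤ) = (n i : ℤ) - (b i : ℤ) := by
    intro i; have hle : b i ≤ n i := h i; simp only [Pi.sub_apply]; omega
  have swap1 : ∑ i, ∑ j, (C i j * n i * b j : ℤ) = ∑ i, (b i : ℤ) * Cv C n i := by
    rw [Finset.sum_comm]
    refine Finset.sum_congr rfl fun x _ => ?_
    rw [Cv, Finset.mul_sum]
    refine Finset.sum_congr rfl fun j _ => ?_
    rw [hsym.apply]; ring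
  have swap2 : ∑ i, ∑ j, (C i j * b i * n j : ℤ) = ∑ i, (b i : ℤ) * Cv C n i := by
    refine Finset.sum_congr rfl fun i _ => ?_
    rw [Cv, Finset.mul_sum]
    exact Finset.sum_congr rfl fun j _ => by ring
  have hQ : (∑ i, ∑ j, C i j * ((n - b) i) * ((n - b) j) : ℤ)
      = (∑ i, ∑ j, C i j * n i * n j) + (∑ i, ∑ j, C i j * b i * b j)
        - 2 * ∑ i, (b i : ℤ) * Cv C n i := by
    have expand : (∑ i, ∑ j, C i j * ((n - b) i) * ((n - b) j) : ℤ)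
        = ∑ i, ∑ j, (C i j * n i * n j + C i j * b i * b j
            - (C i j * n i * b j + C i j * b i * n j)) := by
      refine Finset.sum_congr rfl fun i _ => Finset.sum_congr rfl fun j _ => ?_
      rw [hc i, hc j]; ring
    rw [expand]
    simp only [Finset.sum_sub_distrib, Finset.sum_add_distrib]
    rw [swap1, swap2]; ring
  have e1 := two_W13 hsym hdiag (n - b)
  have e2 := two_W13 hsym hdiag n
  have e3 := two_W13 hsym hdiag b
  have hsum : (∑ i, (((n - b) i : ℕ) : ℤ)) = ∑ i, (n i : ℤ) - ∑ i, (b i : ℤ) := by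
    rw [← Finset.sum_sub_distrib]
    exact Finset.sum_congr rfl fun i _ => hc i
  have hlin : ∑ i, ((2 : ℤ) - Cv C n i) * (b i : ℤ)
      = 2 * ∑ i, (b i : ℤ) - ∑ i, (b i : ℤ) * Cv C n i := by
    rw [Finset.mul_sum, ← Finset.sum_sub_distrib]
    exact Finset.sum_congr rfl fun i _ => by ring
  rw [hQ, hsum] at e1
  rw [hlin]
  linarith [e1, e2, e3]

lemma Cv_sub {c m' : Fin l → ℕ} (h : c ≤ m') (i : Fin l) :
    Cv C (m' - c) i = Cv C m' i - Cv C c i := by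
  unfold Cv
  rw [← Finset.sum_sub_distrib]
  refine Finset.sum_congr rfl fun j _ => ?_
  have hj : c j ≤ m' j := h j
  have hcst : (((m' - c) j : ℕ) : ℤ) = (m' j : ℤ) - (c j : ℤ) := by
    simp only [Pi.sub_apply]; omega
  rw [hcst]; ring

lemma zpow_sum {F : Type} [Field F] {q : F} (hq : q ≠ 0) {ι : Type} (s : Finset ι) (f : ι → ℤ) :
    q ^ (∑ i ∈ s, f i) = ∏ i ∈ s, q ^ f i := by
  classical
  induction s using Finset.induction_on with
  | empty => simp
  | insert a s h ih => rw [Finset.sum_insert h, Finset.prod_insert h, zpow_add₀ hq, ih]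


open scoped Classical in
lemma filter_Iic {n b : Fin l → ℕ} (hb : b ≤ n) :
    (Finset.Iic n).filter (fun p => b + p ≤ n) = Finset.Iic (n - b) := by
  ext p
  simp only [Finset.mem_filter, Finset.mem_Iic]
  constructor
  · rintro ⟨h1, h2⟩ i
    have ha : b i + p i ≤ n i := h2 i
    have hc : b i ≤ n i := hb i
    show p i ≤ n i - b i
    omega
  · intro hp
    constructor
    · intro i
      have ha : p i ≤ (n - b) i := hp i
      have hc : b i ≤ n i := hb i
      simp only [Pi.sub_apply] at ha
      show p i ≤ n i
      omega
    · intro i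
      have ha : p i ≤ (n - b) i := hp i
      have hc : b i ≤ n i := hb i
      simp only [Pi.sub_apply] at ha
      show b i + p i ≤ n i
      omega

open scoped Classical in
lemma Xsymm {F : Type} [Field F] (q : F) (ζ ω : Fin l → F)
    (J1 J2 : (Fin l → ℕ) → F) (h1 : IsFermC C q ζ J1) (h2 : IsFermC C q ω J2)
    (n : Fin l → ℕ) :
    ∑ b ∈ Finset.Iic n, J1 (n - b) * J2 b * q ^ W13 C b * ∏ i, ω i ^ b i
      = ∑ b ∈ Finset.Iic n, J2 (n - b) * J1 b * q ^ W13 C b * ∏ i, ζ i ^ b i := by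
  have key : ∀ (K L : (Fin l → ℕ) → F) (κ lam : Fin l → F), IsFermC C q κ K →
      ∑ b ∈ Finset.Iic n, K (n - b) * L b * q ^ W13 C b * ∏ i, lam i ^ b i
      = ∑ b ∈ Finset.Iic n, ∑ p ∈ Finset.Iic n,
          if b + p ≤ n then
            (L b * q ^ W13 C b * ∏ i, lam i ^ b i)
              * ((∏ i, κ i ^ p i) * q ^ W13 C p * K p)
              * (∏ i, qP q (n i - b i - p i))⁻¹
          else 0 := by
    intro K L κ lam hK
    refine Finset.sum_congr rfl fun b hb => ?_
    rw [Finset.mem_Iic] at hb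
    rw [hK.2 (n - b)]
    simp only [Finset.sum_mul]
    rw [show Finset.Iic (n - b) = (Finset.Iic n).filter (fun p => b + p ≤ n) from
      (filter_Iic hb).symm, Finset.sum_filter]
    refine Finset.sum_congr rfl fun p _ => ?_
    by_cases hc : b + p ≤ n
    · rw [if_pos hc, if_pos hc]
      rw [show (∏ i, qP q ((n - b) i - p i)) = ∏ i, qP q (n i - b i - p i) from
        Finset.prod_congr rfl fun i _ => by simp only [Pi.sub_apply]]
      ring
    · rw [if_neg hc, if_neg hc]
  rw [key J1 J2 ζ ω h1, key J2 J1 ω ζ h2, Finset.sum_comm]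
  refine Finset.sum_congr rfl fun x _ => Finset.sum_congr rfl fun y _ => ?_
  have hcond : (y + x ≤ n) ↔ (x + y ≤ n) := by rw [add_comm]
  by_cases hc : x + y ≤ n
  · rw [if_pos (hcond.mpr hc), if_pos hc]
    rw [show (∏ i, qP q (n i - y i - x i)) = ∏ i, qP q (n i - x i - y i) from
      Finset.prod_congr rfl fun i _ => by rw [Nat.sub_right_comm]]
    ring
  · rw [if_neg (fun h => hc (hcond.mp h)), if_neg hc]


lemma Xvanish {F : Type} [Field F] {q : F} (hq : q ≠ 0) {ζ ω : Fin l → F}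
    (hζ : ∀ i, ζ i ≠ 0) (hsym : C.IsSymm) (hdiag : ∀ i : Fin l, C i i = 2)
    {n : Fin l → ℕ}
    (hrel : ∀ i, ω i = (ζ i)⁻¹ * q ^ ((2 : ℤ) - Cv C n i))
    (hne : (∏ i, ζ i ^ n i) * q ^ W13 C n ≠ 1)
    {J1 J2 : (Fin l → ℕ) → F} (h1 : IsFermC C q ζ J1) (h2 : IsFermC C q ω J2) :
    ∑ b ∈ Finset.Iic n, J1 (n - b) * J2 b * q ^ W13 C b * ∏ i, ω i ^ b i = 0 := by
  set S := ∑ b ∈ Finset.Iic n, J1 (n - b) * J2 b * q ^ W13 C b * ∏ i, ω i ^ b i with hS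
  have hstep : S * ((∏ i, ζ i ^ n i) * q ^ W13 C n) = S := by
    calc S * ((∏ i, ζ i ^ n i) * q ^ W13 C n)
        = ∑ b ∈ Finset.Iic n, (J1 (n - b) * J2 b * q ^ W13 C b * ∏ i, ω i ^ b i)
            * ((∏ i, ζ i ^ n i) * q ^ W13 C n) := Finset.sum_mul _ _ _
      _ = ∑ b ∈ Finset.Iic n,
            J2 b * J1 (n - b) * q ^ W13 C (n - b) * ∏ i, ζ i ^ ((n - b) i) := by
          refine Finset.sum_congr rfl fun b hb => ?_
          rw [Finset.mem_Iic] at hb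
          have h1' : ∀ i, ω i ^ b i * ζ i ^ n i
              = ζ i ^ ((n - b) i) * q ^ (((2 : ℤ) - Cv C n i) * (b i : ℤ)) := by
            intro i
            rw [hrel i, mul_pow, inv_pow, ← zpow_natCast (ζ i) (b i), ← zpow_neg,
              ← zpow_natCast (q ^ ((2 : ℤ) - Cv C n i)) (b i), ← zpow_mul]
            have hbn : b i ≤ n i := hb i
            have hcast : ((n i : ℤ)) + -(b i : ℤ) = (((n - b) i : ℕ) : ℤ) := by
              simp only [Pi.sub_apply]; omega
            calc (ζ i) ^ (-(b i : ℤ)) * q ^ (((2:ℤ) - Cv C n i) * (b i : ℤ)) * ζ i ^ (n i)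
                = ((ζ i) ^ ((n i : ℤ)) * (ζ i) ^ (-(b i : ℤ)))
                    * q ^ (((2:ℤ) - Cv C n i) * (b i : ℤ)) := by
                  rw [zpow_natCast]; ring
              _ = (ζ i) ^ (((n i : ℤ)) + -(b i : ℤ)) * q ^ (((2:ℤ) - Cv C n i) * (b i : ℤ)) := by
                  rw [zpow_add₀ (hζ i)]
              _ = ζ i ^ ((n - b) i) * q ^ (((2 : ℤ) - Cv C n i) * (b i : ℤ)) := by
                  rw [hcast, zpow_natCast]
          have hprod : (∏ i, ω i ^ b i) * (∏ i, ζ i ^ n i)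
              = (∏ i, ζ i ^ ((n - b) i)) * q ^ (∑ i, ((2 : ℤ) - Cv C n i) * (b i : ℤ)) := by
            rw [← Finset.prod_mul_distrib, zpow_sum hq, ← Finset.prod_mul_distrib]
            exact Finset.prod_congr rfl fun i _ => h1' i
          have hqpow : q ^ W13 C b * q ^ (∑ i, ((2 : ℤ) - Cv C n i) * (b i : ℤ)) * q ^ W13 C n
              = q ^ W13 C (n - b) := by
            rw [← zpow_add₀ hq, ← zpow_add₀ hq]
            congr 1
            rw [W13_sub hsym hdiag hb]
            ring
          calc (J1 (n - b) * J2 b * q ^ W13 C b * ∏ i, ω i ^ b i)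
                * ((∏ i, ζ i ^ n i) * q ^ W13 C n)
              = (J2 b * J1 (n - b))
                  * ((∏ i, ω i ^ b i) * (∏ i, ζ i ^ n i))
                  * (q ^ W13 C b * q ^ W13 C n) := by ring
            _ = (J2 b * J1 (n - b))
                  * ((∏ i, ζ i ^ ((n - b) i)) * q ^ (∑ i, ((2 : ℤ) - Cv C n i) * (b i : ℤ)))
                  * (q ^ W13 C b * q ^ W13 C n) := by rw [hprod]
            _ = (J2 b * J1 (n - b)) * (∏ i, ζ i ^ ((n - b) i))
                  * (q ^ W13 C b * q ^ (∑ i, ((2 : ℤ) - Cv C n i) * (b i : ℤ)) * q ^ W13 C n) := by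
                  ring
            _ = J2 b * J1 (n - b) * q ^ W13 C (n - b) * ∏ i, ζ i ^ ((n - b) i) := by
                  rw [hqpow]; ring
      _ = ∑ b ∈ Finset.Iic n, J2 (n - b) * J1 b * q ^ W13 C b * ∏ i, ζ i ^ b i := by
          refine Finset.sum_nbij' (fun b => n - b) (fun b => n - b) ?_ ?_ ?_ ?_ ?_
          · intro a ha
            rw [Finset.mem_Iic] at ha ⊢
            intro i; show n i - a i ≤ n i
            exact Nat.sub_le _ _
          · intro a ha
            rw [Finset.mem_Iic] at ha ⊢
            intro i; show n i - a i ≤ n i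
            exact Nat.sub_le _ _
          · intro a ha
            rw [Finset.mem_Iic] at ha
            funext i
            have : a i ≤ n i := ha i
            show n i - (n i - a i) = a i
            omega
          · intro a ha
            rw [Finset.mem_Iic] at ha
            funext i
            have : a i ≤ n i := ha i
            show n i - (n i - a i) = a i
            omega
          · intro a ha
            rw [Finset.mem_Iic] at ha
            have hsub : n - (n - a) = a := by
              funext i
              have : a i ≤ n i := ha i
              show n i - (n i - a i) = a i
              omega
            rw [hsub]
      _ = S := (Xsymm q ζ ω J1 J2 h1 h2 n).symm
  by_contra hS0
  exact hne (mul_left_cancel₀ hS0 (hstep.trans (mul_one S).symm))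


lemma alg_inj (l : ℕ) :
    Function.Injective (algebraMap (MvPolynomial (Option (Fin l ⊕ Fin l)) ℚ) (F13 l)) :=
  IsFractionRing.injective _ _

lemma q13_ne_zero (l : ℕ) : q13 l ≠ 0 := by
  intro h
  have := alg_inj l (h.trans (map_zero _).symm)
  exact MvPolynomial.X_ne_zero _ this

lemma u13_ne_zero (l : ℕ) (i : Fin l) : u13 l i ≠ 0 := by
  intro h
  have := alg_inj l (h.trans (map_zero _).symm)
  exact MvPolynomial.X_ne_zero _ this

lemma mono_ne_one {l : ℕ} (n : Fin l → ℕ) (hn : n ≠ 0) (t : ℤ) :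
    (∏ i, u13 l i ^ n i) * q13 l ^ t ≠ 1 := by
  intro h
  obtain ⟨i0, hi0⟩ : ∃ i, n i ≠ 0 := by
    by_contra hall
    push_neg at hall
    exact hn (funext fun i => hall i)
  have hq0 := q13_ne_zero l
  have key : (∏ i, u13 l i ^ n i) * q13 l ^ ((t + (t.natAbs : ℤ)).toNat) = q13 l ^ (t.natAbs) := by
    have ht : (((t + (t.natAbs : ℤ)).toNat : ℤ)) = t + (t.natAbs : ℤ) := by
      rw [Int.toNat_of_nonneg]; omega
    calc (∏ i, u13 l i ^ n i) * q13 l ^ ((t + (t.natAbs : ℤ)).toNat)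
        = (∏ i, u13 l i ^ n i) * q13 l ^ ((t + (t.natAbs : ℤ))) := by
          rw [← zpow_natCast (q13 l), ht]
      _ = ((∏ i, u13 l i ^ n i) * q13 l ^ t) * q13 l ^ ((t.natAbs : ℤ)) := by
          rw [zpow_add₀ hq0]; ring
      _ = q13 l ^ (t.natAbs : ℤ) := by rw [h, one_mul]
      _ = q13 l ^ (t.natAbs) := zpow_natCast _ _
  set R := MvPolynomial (Option (Fin l ⊕ Fin l)) ℚ with hR
  have hpoly : ((∏ i, (MvPolynomial.X (some (Sum.inr i)) : R) ^ n i)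
      * (MvPolynomial.X none : R) ^ ((t + (t.natAbs : ℤ)).toNat))
      = (MvPolynomial.X none : R) ^ (t.natAbs) := by
    apply alg_inj l
    rw [map_mul, map_prod, map_pow]
    simp only [map_pow]
    exact key
  have := congrArg (MvPolynomial.eval
    (fun v => if v = some (Sum.inr i0) then (0:ℚ) else 1)) hpoly
  simp only [map_mul, map_prod, map_pow, MvPolynomial.eval_X] at this
  rw [Finset.prod_eq_zero (Finset.mem_univ i0) (by rw [if_pos rfl]; exact zero_pow hi0)] at this
  simp at this


lemma O13 {l : ℕ} {C : Matrix (Fin l) (Fin l) ℤ}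
    (hsym : C.IsSymm) (hdiag : ∀ i, C i i = 2)
    {JA JU : (Fin l → ℕ) → (Fin l → ℕ) → F13 l}
    (hJA : ∀ a, IsFermC C (q13 l)
      (fun i => (u13 l i)⁻¹ * q13 l ^ (-(Cv C a i) + 2)) (JA a))
    (hJU : ∀ a, IsFermC C (q13 l)
      (fun i => u13 l i * q13 l ^ (Cv C a i)) (JU a))
    {c m' : Fin l → ℕ} (hcm : c ≤ m') :
    ∑ a ∈ Finset.Icc c m', JU c (a - c) * JA m' (m' - a) * q13 l ^ W13 C (m' - a) *
        ∏ i, ((u13 l i)⁻¹ * q13 l ^ (-(Cv C m' i) + 2)) ^ ((m' - a) i)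
      = if m' = c then 1 else 0 := by
  have hq0 := q13_ne_zero l
  have hreidx : ∑ a ∈ Finset.Icc c m', JU c (a - c) * JA m' (m' - a) * q13 l ^ W13 C (m' - a) *
        ∏ i, ((u13 l i)⁻¹ * q13 l ^ (-(Cv C m' i) + 2)) ^ ((m' - a) i)
      = ∑ b ∈ Finset.Iic (m' - c), JU c ((m' - c) - b) * JA m' b * q13 l ^ W13 C b *
        ∏ i, ((u13 l i)⁻¹ * q13 l ^ (-(Cv C m' i) + 2)) ^ (b i) := by
    refine Finset.sum_nbij' (fun a => m' - a) (fun b => m' - b) ?_ ?_ ?_ ?_ ?_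
    · intro a ha
      rw [Finset.mem_Icc] at ha
      rw [Finset.mem_Iic]
      intro i
      have h1 : c i ≤ a i := ha.1 i
      have h2 : a i ≤ m' i := ha.2 i
      have h3 : c i ≤ m' i := hcm i
      show m' i - a i ≤ (m' - c) i
      simp only [Pi.sub_apply]; omega
    · intro b hb
      rw [Finset.mem_Iic] at hb
      rw [Finset.mem_Icc]
      constructor
      · intro i
        have h1 : b i ≤ (m' - c) i := hb i
        have h3 : c i ≤ m' i := hcm i
        simp only [Pi.sub_apply] at h1
        show c i ≤ m' i - b i
        omega
      · intro i
        show m' i - b i ≤ m' i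
        exact Nat.sub_le _ _
    · intro a ha
      rw [Finset.mem_Icc] at ha
      funext i
      have h2 : a i ≤ m' i := ha.2 i
      show m' i - (m' i - a i) = a i
      omega
    · intro b hb
      rw [Finset.mem_Iic] at hb
      funext i
      have h1 : b i ≤ (m' - c) i := hb i
      have h3 : c i ≤ m' i := hcm i
      simp only [Pi.sub_apply] at h1
      show m' i - (m' i - b i) = b i
      omega
    · intro a ha
      rw [Finset.mem_Icc] at ha
      have harg : (m' - c) - (m' - a) = a - c := by
        funext i
        have h1 : c i ≤ a i := ha.1 i
        have h2 : a i ≤ m' i := ha.2 i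
        simp only [Pi.sub_apply]
        omega
      rw [harg]
  rw [hreidx]
  by_cases hmc : m' = c
  · subst hmc
    rw [if_pos rfl]
    have h0 : m' - m' = (0 : Fin l → ℕ) := by
      funext i; show m' i - m' i = 0; omega
    rw [h0]
    have hIic : Finset.Iic (0 : Fin l → ℕ) = {0} := by
      ext x
      simp only [Finset.mem_Iic, Finset.mem_singleton]
      constructor
      · intro hx
        funext i
        have hx0 : x i ≤ 0 := hx i
        simp only [Pi.zero_apply]
        omega
      · rintro rfl
        exact le_refl _
    rw [hIic, Finset.sum_singleton]
    have hz : (0 : Fin l → ℕ) - 0 = 0 := by funext i; rfl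
    rw [hz, (hJU m').1, (hJA m').1, W13_zero]
    simp
  · rw [if_neg hmc]
    have hn0 : m' - c ≠ 0 := by
      intro h0
      apply hmc
      funext i
      have h1 : c i ≤ m' i := hcm i
      have h2 : m' i - c i = 0 := congrFun h0 i
      omega
    refine Xvanish hq0 ?_ hsym hdiag ?_ ?_ (hJU c) (hJA m')
    · intro i
      exact mul_ne_zero (u13_ne_zero l i) (zpow_ne_zero _ hq0)
    · intro i
      rw [mul_inv, ← zpow_neg, mul_assoc, ← zpow_add₀ hq0]
      congr 1
      rw [Cv_sub hcm]
      ring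
    · have hexp : (∏ i, (u13 l i * q13 l ^ (Cv C c i)) ^ ((m' - c) i))
          = (∏ i, u13 l i ^ ((m' - c) i)) * q13 l ^ (∑ i, Cv C c i * (((m' - c) i : ℕ) : ℤ)) := by
        rw [zpow_sum hq0, ← Finset.prod_mul_distrib]
        refine Finset.prod_congr rfl fun i _ => ?_
        rw [mul_pow, ← zpow_natCast (q13 l ^ (Cv C c i)), ← zpow_mul]
      rw [hexp, mul_assoc, ← zpow_add₀ hq0]
      exact mono_ne_one _ hn0 _


end Aux13

open scoped Classical in
private def U13M {l : ℕ} (C : Matrix (Fin l) (Fin l) ℤ)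
    (JA : (Fin l → ℕ) → (Fin l → ℕ) → F13 l) (m : Fin l → ℕ) :
    Matrix {x // x ∈ Finset.Iic m} {x // x ∈ Finset.Iic m} (F13 l) :=
  Matrix.of fun a c =>
    if (c : Fin l → ℕ) ≤ (a : Fin l → ℕ) then
      JA (a : Fin l → ℕ) ((a : Fin l → ℕ) - c)
        * q13 l ^ W13 C ((a : Fin l → ℕ) - c)
        * ∏ i, ((u13 l i)⁻¹ * q13 l ^ (-(Cv C (a : Fin l → ℕ) i) + 2)) ^ (((a : Fin l → ℕ) - c) i)
    else 0

open scoped Classical in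
private def V13M {l : ℕ}
    (JU : (Fin l → ℕ) → (Fin l → ℕ) → F13 l) (m : Fin l → ℕ) :
    Matrix {x // x ∈ Finset.Iic m} {x // x ∈ Finset.Iic m} (F13 l) :=
  Matrix.of fun m' a =>
    if (a : Fin l → ℕ) ≤ (m' : Fin l → ℕ) then JU (a : Fin l → ℕ) ((m' : Fin l → ℕ) - a) else 0

open scoped Classical in
lemma UV13 {l : ℕ} {C : Matrix (Fin l) (Fin l) ℤ}
    (hsym : C.IsSymm) (hdiag : ∀ i, C i i = 2)
    {JA JU : (Fin l → ℕ) → (Fin l → ℕ) → F13 l}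
    (hJA : ∀ a, IsFermC C (q13 l)
      (fun i => (u13 l i)⁻¹ * q13 l ^ (-(Cv C a i) + 2)) (JA a))
    (hJU : ∀ a, IsFermC C (q13 l)
      (fun i => u13 l i * q13 l ^ (Cv C a i)) (JU a))
    (m : Fin l → ℕ) :
    U13M C JA m * V13M JU m = 1 := by
  ext m' c
  rw [Matrix.mul_apply, Matrix.one_apply]
  set F : (Fin l → ℕ) → F13 l := fun x =>
    if (c : Fin l → ℕ) ≤ x ∧ x ≤ (m' : Fin l → ℕ) then
      JU (c : Fin l → ℕ) (x - c) * JA (m' : Fin l → ℕ) ((m' : Fin l → ℕ) - x)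
        * q13 l ^ W13 C ((m' : Fin l → ℕ) - x)
        * ∏ i, ((u13 l i)⁻¹ * q13 l ^ (-(Cv C (m' : Fin l → ℕ) i) + 2))
            ^ (((m' : Fin l → ℕ) - x) i)
    else 0 with hF
  have hterm : ∀ a : {x // x ∈ Finset.Iic m},
      U13M C JA m m' a * V13M JU m a c = F (a : Fin l → ℕ) := by
    intro a
    simp only [U13M, V13M, Matrix.of_apply, hF]
    by_cases h1 : (a : Fin l → ℕ) ≤ (m' : Fin l → ℕ)
    · by_cases h2 : (c : Fin l → ℕ) ≤ (a : Fin l → ℕ)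
      · rw [if_pos h1, if_pos h2, if_pos ⟨h2, h1⟩]
        ring
      · rw [if_pos h1, if_neg h2, mul_zero, if_neg (fun h => h2 h.1)]
    · rw [if_neg h1, zero_mul, if_neg (fun h => h1 h.2)]
  rw [Finset.sum_congr rfl fun a _ => hterm a, Finset.univ_eq_attach,
    Finset.sum_attach (Finset.Iic m) F, hF]
  rw [← Finset.sum_filter]
  by_cases hcm : (c : Fin l → ℕ) ≤ (m' : Fin l → ℕ)
  · have hfil : (Finset.Iic m).filter
        (fun x => (c : Fin l → ℕ) ≤ x ∧ x ≤ (m' : Fin l → ℕ))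
        = Finset.Icc (c : Fin l → ℕ) (m' : Fin l → ℕ) := by
      ext x
      simp only [Finset.mem_filter, Finset.mem_Iic, Finset.mem_Icc]
      constructor
      · rintro ⟨-, h⟩; exact h
      · intro h
        exact ⟨h.2.trans (Finset.mem_Iic.mp m'.2), h⟩
    rw [hfil, Aux13.O13 hsym hdiag hJA hJU hcm]
    by_cases he : m' = c
    · rw [if_pos (show ((m' : Fin l → ℕ)) = (c : Fin l → ℕ) by rw [he]), if_pos he]
    · rw [if_neg (fun h => he (Subtype.ext h)), if_neg he]
  · have hfil : (Finset.Iic m).filter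
        (fun x => (c : Fin l → ℕ) ≤ x ∧ x ≤ (m' : Fin l → ℕ)) = ∅ := by
      rw [Finset.filter_eq_empty_iff]
      intro x _ hx
      exact hcm (hx.1.trans hx.2)
    rw [hfil, Finset.sum_empty]
    rw [if_neg (fun h : m' = c => hcm (by simp [h]))]


theorem stmt_13 (l : ℕ) (hl : 1 ≤ l) (C : Matrix (Fin l) (Fin l) ℤ)
    (hsym : C.IsSymm) (hdiag : ∀ i, C i i = 2)
    (hoff : ∀ i j, i ≠ j → C i j = 0 ∨ C i j = -1)
    (hposdef : ∀ x : Fin l → ℤ, x ≠ 0 → 0 < ∑ i, ∑ j, C i j * x i * x j)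
    -- J in the variables z
    (Jz : (Fin l → ℕ) → F13 l) (hJz : IsFermC C (q13 l) (z13 l) Jz)
    -- for each a, J in the substituted variables u_i⁻¹ q^{−(Ca)_i+2}
    (JA : (Fin l → ℕ) → (Fin l → ℕ) → F13 l)
    (hJA : ∀ a, IsFermC C (q13 l)
      (fun i => (u13 l i)⁻¹ * q13 l ^ (-(Cv C a i) + 2)) (JA a))
    -- for each a, J in the substituted variables u_i q^{(Ca)_i}
    (JU : (Fin l → ℕ) → (Fin l → ℕ) → F13 l)
    (hJU : ∀ a, IsFermC C (q13 l)
      (fun i => u13 l i * q13 l ^ (Cv C a i)) (JU a)) :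
    ∀ m : Fin l → ℕ,
      Jz m = ∑ a ∈ Finset.Iic m,
        (∑ b ∈ Finset.Iic a,
          Jz (a - b) * JA a b * q13 l ^ (W13 C b) *
            ∏ i, ((u13 l i)⁻¹ * q13 l ^ (-(Cv C a i) + 2)) ^ b i) *
        JU a (m - a) := by
  classical
  intro m
  have hVU : V13M JU m * U13M C JA m = 1 :=
    mul_eq_one_comm.mp (UV13 hsym hdiag hJA hJU m)
  set E : (Fin l → ℕ) → (Fin l → ℕ) → F13 l := fun a c =>
    JA a (a - c) * q13 l ^ W13 C (a - c) *
      ∏ i, ((u13 l i)⁻¹ * q13 l ^ (-(Cv C a i) + 2)) ^ ((a - c) i) with hE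
  -- entry extraction from hVU
  have hentry : ∀ c : Fin l → ℕ, c ∈ Finset.Iic m →
      (∑ x ∈ Finset.Iic m, JU x (m - x) * (if c ≤ x then E x c else 0))
        = if m = c then 1 else 0 := by
    intro c hc
    have h := congrFun (congrFun hVU ⟨m, Finset.mem_Iic.mpr le_rfl⟩) ⟨c, hc⟩
    rw [Matrix.mul_apply, Matrix.one_apply] at h
    set G : (Fin l → ℕ) → F13 l := fun x =>
      JU x (m - x) * (if c ≤ x then E x c else 0) with hG
    have hterm : ∀ a : {x // x ∈ Finset.Iic m},
        V13M JU m ⟨m, Finset.mem_Iic.mpr le_rfl⟩ a * U13M C JA m a ⟨c, hc⟩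
          = G (a : Fin l → ℕ) := by
      intro a
      simp only [V13M, U13M, Matrix.of_apply, hG, hE]
      rw [if_pos (Finset.mem_Iic.mp a.2)]
    rw [Finset.sum_congr rfl (fun a _ => hterm a), Finset.univ_eq_attach,
      Finset.sum_attach (Finset.Iic m) G] at h
    rw [h]
    exact if_congr Subtype.mk_eq_mk rfl rfl
  -- rewrite the RHS of the goal
  have hinner : ∀ a : Fin l → ℕ,
      (∑ b ∈ Finset.Iic a, Jz (a - b) * JA a b * q13 l ^ W13 C b *
          ∏ i, ((u13 l i)⁻¹ * q13 l ^ (-(Cv C a i) + 2)) ^ b i)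
        = ∑ c ∈ Finset.Iic a, Jz c * E a c := by
    intro a
    refine Finset.sum_nbij' (fun b => a - b) (fun c' => a - c') ?_ ?_ ?_ ?_ ?_
    · intro b hb
      rw [Finset.mem_Iic] at hb ⊢
      intro i; show a i - b i ≤ a i
      exact Nat.sub_le _ _
    · intro b hb
      rw [Finset.mem_Iic] at hb ⊢
      intro i; show a i - b i ≤ a i
      exact Nat.sub_le _ _
    · intro b hb
      rw [Finset.mem_Iic] at hb
      funext i
      have : b i ≤ a i := hb i
      show a i - (a i - b i) = b i
      omega
    · intro b hb
      rw [Finset.mem_Iic] at hb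
      funext i
      have : b i ≤ a i := hb i
      show a i - (a i - b i) = b i
      omega
    · intro b hb
      rw [Finset.mem_Iic] at hb
      have hba : a - (a - b) = b := by
        funext i
        have : b i ≤ a i := hb i
        show a i - (a i - b i) = b i
        omega
      simp only [hE]
      rw [hba]
      try ring
  calc Jz m
      = ∑ c ∈ Finset.Iic m, Jz c * (if m = c then 1 else 0) := by
        simp only [mul_ite, mul_one, mul_zero]
        rw [Finset.sum_ite_eq (Finset.Iic m) m Jz,
          if_pos (Finset.mem_Iic.mpr le_rfl)]
    _ = ∑ c ∈ Finset.Iic m, Jz c *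
          (∑ x ∈ Finset.Iic m, JU x (m - x) * (if c ≤ x then E x c else 0)) := by
        refine Finset.sum_congr rfl fun c hc => ?_
        rw [hentry c hc]
    _ = ∑ c ∈ Finset.Iic m, ∑ x ∈ Finset.Iic m,
          (if c ≤ x then Jz c * E x c * JU x (m - x) else 0) := by
        refine Finset.sum_congr rfl fun c _ => ?_
        rw [Finset.mul_sum]
        refine Finset.sum_congr rfl fun x _ => ?_
        by_cases hcx : c ≤ x
        · rw [if_pos hcx, if_pos hcx]; ring
        · rw [if_neg hcx, if_neg hcx, mul_zero, mul_zero]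
    _ = ∑ x ∈ Finset.Iic m, ∑ c ∈ Finset.Iic m,
          (if c ≤ x then Jz c * E x c * JU x (m - x) else 0) := Finset.sum_comm
    _ = ∑ a ∈ Finset.Iic m,
        (∑ b ∈ Finset.Iic a,
          Jz (a - b) * JA a b * q13 l ^ (W13 C b) *
            ∏ i, ((u13 l i)⁻¹ * q13 l ^ (-(Cv C a i) + 2)) ^ b i) *
        JU a (m - a) := by
        refine Finset.sum_congr rfl fun a ha => ?_
        rw [hinner a, Finset.sum_mul]
        have hfil : (Finset.Iic m).filter (fun c => c ≤ a) = Finset.Iic a := by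
          ext x
          simp only [Finset.mem_filter, Finset.mem_Iic]
          exact ⟨fun h => h.2, fun h => ⟨h.trans (Finset.mem_Iic.mp ha), h⟩⟩
        rw [← hfil, Finset.sum_filter]

end
end
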